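/- Let O be an order in an imaginary quadratic field K of discriminant D < 0, and let Q = ax²+bxy+cy² be a primitive positive-definite form of discriminant D with gcd(a,N)=1. Then Za + Z·aτ_Q is a proper O-ideal of norm a, where τ_Q = (-b+√D)/(2a); in particular O = Z + Z·aτ_Q. -/

import Mathlib

/-- The square root `√D ∈ ℂ` of a negative integer `D`. -/
noncomputable def sqrtD (D : ℤ) : ℂ := Complex.I * Real.sqrt (-(D : ℝ))

/-- The order `O = ℤ + ℤ·(D+√D)/2` of discriminant `D`, as a `ℤ`-submodule of `ℂ`. -/
noncomputable def ordO (D : ℤ) : Submodule ℤ ℂ :=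
  Submodule.span ℤ ({1, ((D : ℂ) + sqrtD D) / 2} : Set ℂ)

/-- The root `τ_Q = (-b + √D)/(2a)` of `Q(x,1) = 0` in the upper half-plane. -/
noncomputable def tauQ (D a b : ℤ) : ℂ := (-(b : ℂ) + sqrtD D) / (2 * a)

/-- The lattice `ℤa + ℤ·aτ_Q`. -/
noncomputable def latL (D a b : ℤ) : Submodule ℤ ℂ :=
  Submodule.span ℤ ({(a : ℂ), (a : ℂ) * tauQ D a b} : Set ℂ)

/-- `w = (-b+√D)/2 = a·τ_Q`. -/
noncomputable def wQ (D b : ℤ) : ℂ := (-(b : ℂ) + sqrtD D) / 2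

lemma sqrtD_sq (D : ℤ) (hD : D < 0) : sqrtD D ^ 2 = (D : ℂ) := by
  have h : (0:ℝ) ≤ -(D:ℝ) := by
    have : (D:ℝ) < 0 := by exact_mod_cast hD
    linarith
  unfold sqrtD
  rw [mul_pow, Complex.I_sq, ← Complex.ofReal_pow, Real.sq_sqrt h]
  push_cast
  ring

lemma wQ_re (D b : ℤ) : (wQ D b).re = -(b:ℝ)/2 := by
  simp [wQ, sqrtD, Complex.div_re, Complex.add_re, Complex.mul_re]

lemma wQ_im (D b : ℤ) : (wQ D b).im = Real.sqrt (-(D:ℝ)) / 2 := by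
  simp [wQ, sqrtD, Complex.div_im, Complex.add_im, Complex.mul_im]

/-- Uniqueness of the representation `m + n·w`. -/
lemma uniq (D : ℤ) (hD : D < 0) (b : ℤ) {m n m' n' : ℤ}
    (h : (m:ℂ) + n * wQ D b = m' + n' * wQ D b) : m = m' ∧ n = n' := by
  have hr : 0 < Real.sqrt (-(D:ℝ)) := by
    apply Real.sqrt_pos.mpr
    have : (D:ℝ) < 0 := by exact_mod_cast hD
    linarith
  have him := congrArg Complex.im h
  have hre := congrArg Complex.re h
  simp [Complex.add_im, Complex.add_re, Complex.mul_im, Complex.mul_re, wQ_re, wQ_im] at him hre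
  rcases him with hn | hbad
  · subst hn
    have hm : (m:ℝ) = m' := by linarith
    exact ⟨by exact_mod_cast hm, rfl⟩
  · exact absurd hbad hr.ne'

lemma wQ_sq (D a b c : ℤ) (hD : D < 0) (hdisc : b ^ 2 - 4 * a * c = D) :
    wQ D b ^ 2 + b * wQ D b + a * c = 0 := by
  have hs := sqrtD_sq D hD
  have hd : ((b:ℂ))^2 - 4*(a:ℂ)*(c:ℂ) = (D:ℂ) := by
    exact_mod_cast congrArg (Int.cast : ℤ → ℂ) hdisc
  unfold wQ
  ring_nf
  linear_combination (1/4 : ℂ) * hs - (1/4 : ℂ) * hd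

/-- Let `O` be the order of discriminant `D < 0` and let `Q = ax² + bxy + cy²` be primitive
positive-definite of discriminant `D` with `gcd(a,N) = 1`. Then `ℤa + ℤaτ_Q` is a proper
`O`-ideal of norm `a`, and in particular `O = ℤ + ℤ·aτ_Q`. -/
theorem stmt_7 (D : ℤ) (N : ℕ) (a b c : ℤ) (hD : D < 0)
    (hdisc : b ^ 2 - 4 * a * c = D) (ha : 0 < a)
    (hprim : Int.gcd (Int.gcd a b) c = 1) (haN : Int.gcd a N = 1) :
    Submodule.span ℤ ({1, (a : ℂ) * tauQ D a b} : Set ℂ) = ordO D ∧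
    (∀ α ∈ ordO D, ∀ x ∈ latL D a b, α * x ∈ latL D a b) ∧
    {α : ℂ | ∀ x ∈ latL D a b, α * x ∈ latL D a b} = (ordO D : Set ℂ) ∧
    (latL D a b).toAddSubgroup.relIndex (ordO D).toAddSubgroup = a.toNat := by
  classical
  have haC : (a:ℂ) ≠ 0 := by exact_mod_cast ha.ne'
  have hw : (a:ℂ) * tauQ D a b = wQ D b := by
    unfold tauQ wQ
    field_simp
  have hsq := wQ_sq D a b c hD hdisc
  obtain ⟨t, ht⟩ : Even (b * (b+1)) := Int.even_mul_succ_self b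
  have hk : D + b = 2 * (t - 2*a*c) := by linear_combination -hdisc + ht
  set k : ℤ := t - 2*a*c with hk_def
  have hkC : ((D:ℂ) + (b:ℂ)) = 2*(k:ℂ) := by exact_mod_cast congrArg (Int.cast : ℤ → ℂ) hk
  have hW : ((D : ℂ) + sqrtD D) / 2 = wQ D b + k := by
    unfold wQ
    linear_combination (1/2 : ℂ) * hkC
  -- membership characterizations
  have memO : ∀ z : ℂ, (z ∈ ordO D ↔ ∃ m n : ℤ, z = m + n * wQ D b) := by
    intro z
    unfold ordO
    rw [hW, Submodule.mem_span_pair]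
    constructor
    · rintro ⟨p, q, rfl⟩
      exact ⟨p + q*k, q, by push_cast [zsmul_eq_mul]; ring⟩
    · rintro ⟨m, n, rfl⟩
      exact ⟨m - n*k, n, by push_cast [zsmul_eq_mul]; ring⟩
  have memL : ∀ z : ℂ, (z ∈ latL D a b ↔ ∃ m n : ℤ, z = a * m + n * wQ D b) := by
    intro z
    unfold latL
    rw [hw, Submodule.mem_span_pair]
    constructor
    · rintro ⟨p, q, rfl⟩
      exact ⟨p, q, by push_cast [zsmul_eq_mul]; ring⟩
    · rintro ⟨m, n, rfl⟩
      exact ⟨m, n, by push_cast [zsmul_eq_mul]; ring⟩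
  -- Part 1
  have part1 : Submodule.span ℤ ({1, (a : ℂ) * tauQ D a b} : Set ℂ) = ordO D := by
    rw [hw]
    apply le_antisymm
    · rw [Submodule.span_le]
      rintro x hx
      rcases hx with rfl | hx
      · exact (memO 1).mpr ⟨1, 0, by push_cast; ring⟩
      · rcases hx with rfl
        exact (memO _).mpr ⟨0, 1, by push_cast; ring⟩
    · unfold ordO
      rw [Submodule.span_le]
      rintro x hx
      rcases hx with rfl | hx
      · exact Submodule.subset_span (Set.mem_insert _ _)
      · rcases hx with rfl
        rw [hW]
        exact Submodule.mem_span_pair.mpr ⟨k, 1, by push_cast [zsmul_eq_mul]; ring⟩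
  -- Part 2
  have part2 : ∀ α ∈ ordO D, ∀ x ∈ latL D a b, α * x ∈ latL D a b := by
    intro α hα x hx
    obtain ⟨p, q, rfl⟩ := (memO α).mp hα
    obtain ⟨u, v, rfl⟩ := (memL x).mp hx
    refine (memL _).mpr ⟨p*u - q*v*c, p*v + q*u*a - q*v*b, ?_⟩
    push_cast
    linear_combination ((q*v) : ℂ) * hsq
  -- Part 3
  have part3 : {α : ℂ | ∀ x ∈ latL D a b, α * x ∈ latL D a b} = (ordO D : Set ℂ) := by
    ext α
    simp only [Set.mem_setOf_eq, SetLike.mem_coe]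
    constructor
    · intro hα
      have haL : (a:ℂ) ∈ latL D a b := (memL _).mpr ⟨1, 0, by push_cast; ring⟩
      have hwL : wQ D b ∈ latL D a b := (memL _).mpr ⟨0, 1, by push_cast; ring⟩
      obtain ⟨p, q, h1⟩ := (memL _).mp (hα _ haL)
      obtain ⟨p', q', h2⟩ := (memL _).mp (hα _ hwL)
      have e : ((a:ℂ)*p + q*wQ D b) * wQ D b = ((a:ℂ)*p' + q'*wQ D b) * a := by
        rw [← h1, ← h2]; ring
      have h3 : ((-(q*(a*c)) : ℤ) : ℂ) + ((p*a - q*b : ℤ) : ℂ) * wQ D b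
          = ((p'*a^2 : ℤ) : ℂ) + ((q'*a : ℤ) : ℂ) * wQ D b := by
        push_cast
        linear_combination e - (q:ℂ) * hsq
      obtain ⟨e1, e2⟩ := uniq D hD b h3
      have hqb : a ∣ q * b := ⟨p - q', by linarith⟩
      have hqc : a ∣ q * c := by
        refine ⟨-p', ?_⟩
        have h4 : (q*c) * a = (a * (-p')) * a := by linear_combination -e1
        exact mul_right_cancel₀ ha.ne' h4
      have hq : a ∣ q := by
        have h5 : a.natAbs ∣ q.natAbs * a.natAbs := ⟨q.natAbs, mul_comm _ _⟩
        have h6 : a.natAbs ∣ q.natAbs * b.natAbs := by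
          rw [← Int.natAbs_mul]; exact Int.natAbs_dvd_natAbs.mpr hqb
        have h7 : a.natAbs ∣ q.natAbs * c.natAbs := by
          rw [← Int.natAbs_mul]; exact Int.natAbs_dvd_natAbs.mpr hqc
        have h8 : a.natAbs ∣ q.natAbs * (Nat.gcd (Nat.gcd a.natAbs b.natAbs) c.natAbs) := by
          rw [← Nat.gcd_mul_left, ← Nat.gcd_mul_left]
          exact Nat.dvd_gcd (Nat.dvd_gcd h5 h6) h7
        have h9 : Nat.gcd (Nat.gcd a.natAbs b.natAbs) c.natAbs = 1 := by
          simpa [Int.gcd, Int.natAbs_natCast] using hprim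
        rw [h9, mul_one] at h8
        exact Int.natAbs_dvd_natAbs.mp h8
      obtain ⟨q0, rfl⟩ := hq
      have hα' : α = (p:ℂ) + q0 * wQ D b := by
        have h10 : α * a = ((p:ℂ) + q0 * wQ D b) * a := by
          rw [h1]; push_cast; ring
        exact mul_right_cancel₀ haC h10
      exact (memO α).mpr ⟨p, q0, hα'⟩
    · intro hα
      exact fun x hx => part2 α hα x hx
  refine ⟨part1, part2, part3, ?_⟩
  -- Part 4
  have hexO : ∀ z : (ordO D).toAddSubgroup, ∃ pr : ℤ × ℤ, (z:ℂ) = pr.1 + pr.2 * wQ D b := by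
    intro z
    obtain ⟨m, n, hmn⟩ := (memO z).mp z.2
    exact ⟨(m, n), hmn⟩
  choose g hg using hexO
  have hn0 : ((a.toNat : ℤ)) = a := Int.toNat_of_nonneg ha.le
  let f : (ordO D).toAddSubgroup →+ ZMod a.toNat :=
    AddMonoidHom.mk' (fun z => (((g z).1 : ℤ) : ZMod a.toNat)) (by
      intro z z'
      have h1 := hg (z + z')
      have hzz' : ((z + z' : (ordO D).toAddSubgroup) : ℂ) = (z:ℂ) + (z':ℂ) := rfl
      have h2 : ((g (z+z')).1 : ℂ) + (g (z+z')).2 * wQ D b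
          = (((g z).1 + (g z').1 : ℤ) : ℂ) + (((g z).2 + (g z').2 : ℤ) : ℂ) * wQ D b := by
        rw [← h1, hzz', hg z, hg z']
        push_cast
        ring
      have h3 := (uniq D hD b h2).1
      show ((g (z+z')).1 : ZMod a.toNat) = ((g z).1 : ZMod a.toNat) + ((g z').1 : ZMod a.toNat)
      rw [h3]
      push_cast
      ring)
  have hf : ∀ z, f z = (((g z).1 : ℤ) : ZMod a.toNat) := fun _ => rfl
  have hfsur : Function.Surjective f := by
    intro x
    obtain ⟨m, rfl⟩ := ZMod.intCast_surjective x
    have hmO : ((m:ℂ)) ∈ (ordO D).toAddSubgroup := (memO _).mpr ⟨m, 0, by push_cast; ring⟩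
    refine ⟨⟨(m:ℂ), hmO⟩, ?_⟩
    rw [hf]
    have h2 : ((g ⟨(m:ℂ), hmO⟩).1 : ℂ) + (g ⟨(m:ℂ), hmO⟩).2 * wQ D b
        = (m:ℂ) + (0:ℤ) * wQ D b := by
      rw [← hg ⟨(m:ℂ), hmO⟩]
      push_cast
      ring
    rw [(uniq D hD b h2).1]
  have hker : f.ker = (latL D a b).toAddSubgroup.addSubgroupOf (ordO D).toAddSubgroup := by
    ext z
    rw [AddMonoidHom.mem_ker, hf, ZMod.intCast_zmod_eq_zero_iff_dvd,
      AddSubgroup.mem_addSubgroupOf]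
    rw [hn0]
    constructor
    · rintro ⟨m, hm⟩
      refine (memL _).mpr ⟨m, (g z).2, ?_⟩
      rw [hg z, hm]
      push_cast
      ring
    · intro hz
      obtain ⟨u, v, huv⟩ := (memL _).mp hz
      have h2 : ((g z).1 : ℂ) + (g z).2 * wQ D b = ((a*u : ℤ) : ℂ) + (v : ℂ) * wQ D b := by
        rw [← hg z, huv]
        push_cast
        ring
      exact (uniq D hD b h2).1 ▸ ⟨u, rfl⟩
  rw [AddSubgroup.relIndex, ← hker, AddSubgroup.index_ker,
    AddMonoidHom.range_eq_top.mpr hfsur]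
  have htop : Nat.card (⊤ : AddSubgroup (ZMod a.toNat)) = Nat.card (ZMod a.toNat) :=
    Nat.card_congr AddSubgroup.topEquiv.toEquiv
  rw [htop, Nat.card_zmod]
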